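/- Let f : ℝⁿ → ℝ be twice continuously differentiable, m > 0, γ ≥ 0, h > 0, and let Ψ be the Nesterov phase-space step Ψ(x, p) = (X, P) with x_{1/2} = x + (h/m) e^{−γh} p, P = e^{−γh} p − h ∇f(x_{1/2}), X = x + (h/m) P. Then the Jacobian determinant of Ψ at every point (x, p) equals det DΨ(x, p) = e^{−nγh} · det( I − (h²/m) ∇²f(x_{1/2}) ), where I is the n × n identity matrix. -/

import Mathlib

section aux

variable {E F : Type*} [AddCommGroup E] [Module ℝ E] [AddCommGroup F] [Module ℝ F]
  [FiniteDimensional ℝ E] [FiniteDimensional ℝ F]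

lemma my_det_prodMap (φ : E →ₗ[ℝ] E) (ψ : F →ₗ[ℝ] F) :
    LinearMap.det (φ.prodMap ψ) = LinearMap.det φ * LinearMap.det ψ := by
  classical
  let b₁ := Module.finBasis ℝ E
  let b₂ := Module.finBasis ℝ F
  rw [← LinearMap.det_toMatrix (b₁.prod b₂), LinearMap.toMatrix_prodMap,
    Matrix.det_fromBlocks_zero₂₁, LinearMap.det_toMatrix, LinearMap.det_toMatrix]

/-- Lower shear `(ξ, π) ↦ (ξ, π + M ξ)`. -/
def shearL (M : E →ₗ[ℝ] F) : (E × F) →ₗ[ℝ] (E × F) :=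
  (LinearMap.fst ℝ E F).prod (LinearMap.snd ℝ E F + M ∘ₗ LinearMap.fst ℝ E F)

lemma shearL_apply (M : E →ₗ[ℝ] F) (z : E × F) : shearL M z = (z.1, z.2 + M z.1) := rfl

lemma shearL_comp (M M' : E →ₗ[ℝ] F) : shearL M ∘ₗ shearL M' = shearL (M + M') := by
  apply LinearMap.ext; intro z
  simp [shearL_apply, add_assoc, add_comm, add_left_comm]

lemma shearL_zero : shearL (0 : E →ₗ[ℝ] F) = LinearMap.id := by
  apply LinearMap.ext; intro z
  simp [shearL_apply]

lemma det_shearL (M : E →ₗ[ℝ] F) : LinearMap.det (shearL M) = 1 := by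
  have hunit : LinearMap.det (shearL M) * LinearMap.det (shearL (-M)) = 1 := by
    rw [← LinearMap.det_comp, shearL_comp, add_neg_cancel, shearL_zero, LinearMap.det_id]
  let e : (E × F) ≃ₗ[ℝ] (E × F) :=
    (LinearEquiv.smulOfNeZero ℝ E (2 : ℝ) two_ne_zero).prodCongr (LinearEquiv.refl ℝ F)
  have hconj : (e : (E × F) →ₗ[ℝ] (E × F)) ∘ₗ shearL M ∘ₗ (e.symm : (E × F) →ₗ[ℝ] (E × F))
      = shearL ((1/2 : ℝ) • M) := by
    apply LinearMap.ext; intro z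
    have h1 : e.symm z = ((2 : ℝ)⁻¹ • z.1, z.2) := by
      apply e.injective
      simp [e, LinearEquiv.prodCongr_apply, smul_smul, Units.smul_def]
    simp only [LinearMap.comp_apply, LinearEquiv.coe_coe, h1, shearL_apply]
    apply Prod.ext
    · show (2 : ℝ) • ((2 : ℝ)⁻¹ • z.1) = z.1
      rw [smul_smul]; norm_num
    · show z.2 + M ((2 : ℝ)⁻¹ • z.1) = z.2 + ((1/2 : ℝ) • M) z.1
      rw [map_smul]
      norm_num
  have hhalf : LinearMap.det (shearL ((1/2 : ℝ) • M)) = LinearMap.det (shearL M) := by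
    rw [← hconj, LinearMap.det_conj]
  have hsq : LinearMap.det (shearL M) = LinearMap.det (shearL M) ^ 2 := by
    have : shearL ((1/2 : ℝ) • M) ∘ₗ shearL ((1/2 : ℝ) • M) = shearL M := by
      rw [shearL_comp, ← add_smul]; norm_num
    calc LinearMap.det (shearL M) = LinearMap.det (shearL ((1/2:ℝ)•M) ∘ₗ shearL ((1/2:ℝ)•M)) := by
          rw [this]
      _ = LinearMap.det (shearL M) ^ 2 := by
          rw [LinearMap.det_comp, hhalf, sq]
  have hne : LinearMap.det (shearL M) ≠ 0 := by
    intro h0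
    rw [h0, zero_mul] at hunit
    exact zero_ne_one hunit
  have := hsq
  rw [sq] at this
  field_simp at this
  nlinarith [this]

/-- Upper shear `(ξ, π) ↦ (ξ + M π, π)`. -/
def shearU (M : F →ₗ[ℝ] E) : (E × F) →ₗ[ℝ] (E × F) :=
  (LinearMap.fst ℝ E F + M ∘ₗ LinearMap.snd ℝ E F).prod (LinearMap.snd ℝ E F)

lemma shearU_apply (M : F →ₗ[ℝ] E) (z : E × F) : shearU M z = (z.1 + M z.2, z.2) := rfl

lemma det_shearU (M : F →ₗ[ℝ] E) : LinearMap.det (shearU M) = 1 := by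
  have hconj : ((LinearEquiv.prodComm ℝ F E : (F × E) ≃ₗ[ℝ] (E × F)) :
        (F × E) →ₗ[ℝ] (E × F)) ∘ₗ shearL M ∘ₗ
        ((LinearEquiv.prodComm ℝ F E).symm : (E × F) →ₗ[ℝ] (F × E))
      = shearU M := by
    apply LinearMap.ext; intro z
    rfl
  rw [← hconj, LinearMap.det_conj, det_shearL]

end aux

/-- Nesterov's accelerated gradient step in phase space:
`x_{1/2} = x + (h/m) e^{−γh} p`, `P = e^{−γh} p − h ∇f(x_{1/2})`,
`X = x + (h/m) P`. -/
noncomputable def nesterovStep {n : ℕ} (f : EuclideanSpace ℝ (Fin n) → ℝ) (m γ h : ℝ)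
    (z : EuclideanSpace ℝ (Fin n) × EuclideanSpace ℝ (Fin n)) :
    EuclideanSpace ℝ (Fin n) × EuclideanSpace ℝ (Fin n) :=
  let P := Real.exp (-γ * h) • z.2 - h • gradient f (z.1 + (h / m) • (Real.exp (-γ * h) • z.2))
  (z.1 + (h / m) • P, P)

/-- the Jacobian determinant of Nesterov's phase-space step is
`det DΨ(x,p) = e^{−nγh} · det(I − (h²/m) ∇²f(x_{1/2}))`. -/
theorem nesterov_jacobian_det
    {n : ℕ} (f : EuclideanSpace ℝ (Fin n) → ℝ) (hf : ContDiff ℝ 2 f)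
    (m γ h : ℝ) (hm : 0 < m) (hγ : 0 ≤ γ) (hh : 0 < h)
    (x p : EuclideanSpace ℝ (Fin n)) :
    LinearMap.det ((fderiv ℝ (nesterovStep f m γ h) (x, p)).toLinearMap)
      = Real.exp (-(n : ℝ) * γ * h) *
        LinearMap.det
          ((LinearMap.id : EuclideanSpace ℝ (Fin n) →ₗ[ℝ] EuclideanSpace ℝ (Fin n))
            - (h ^ 2 / m) •
              (fderiv ℝ (gradient f) (x + (h / m) • (Real.exp (-γ * h) • p))).toLinearMap) := by
  set a := Real.exp (-γ * h) with ha
  set c := h / m with hc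
  set q : EuclideanSpace ℝ (Fin n) := x + c • (a • p) with hq
  -- gradient f is C¹
  have hgrad : ContDiff ℝ 1 (gradient f) := by
    have h1 : ContDiff ℝ 1 (fderiv ℝ f) := hf.fderiv_right (by norm_num)
    exact ((InnerProductSpace.toDual ℝ (EuclideanSpace ℝ (Fin n))).symm.contDiff).comp h1
  set A : EuclideanSpace ℝ (Fin n) →L[ℝ] EuclideanSpace ℝ (Fin n) := fderiv ℝ (gradient f) q with hA
  have hAq : HasFDerivAt (gradient f) A q :=
    ((hgrad.differentiable one_ne_zero) q).hasFDerivAt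
  -- derivative of the inner affine map z ↦ z.1 + c • (a • z.2)
  have hφ : HasFDerivAt (fun z : EuclideanSpace ℝ (Fin n) × EuclideanSpace ℝ (Fin n) => z.1 + c • (a • z.2))
      (ContinuousLinearMap.fst ℝ (EuclideanSpace ℝ (Fin n)) (EuclideanSpace ℝ (Fin n)) + c • (a • ContinuousLinearMap.snd ℝ (EuclideanSpace ℝ (Fin n)) (EuclideanSpace ℝ (Fin n)))) (x, p) :=
    (hasFDerivAt_fst).add (((hasFDerivAt_snd).const_smul a).const_smul c)
  set Dφ : (EuclideanSpace ℝ (Fin n) × EuclideanSpace ℝ (Fin n)) →L[ℝ] EuclideanSpace ℝ (Fin n) :=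
    ContinuousLinearMap.fst ℝ (EuclideanSpace ℝ (Fin n)) (EuclideanSpace ℝ (Fin n)) + c • (a • ContinuousLinearMap.snd ℝ (EuclideanSpace ℝ (Fin n)) (EuclideanSpace ℝ (Fin n))) with hDφ
  have hg' : HasFDerivAt (fun z : EuclideanSpace ℝ (Fin n) × EuclideanSpace ℝ (Fin n) => gradient f (z.1 + c • (a • z.2)))
      (A.comp Dφ) (x, p) := by have := hAq.comp (x, p) hφ; exact this
  set DP : (EuclideanSpace ℝ (Fin n) × EuclideanSpace ℝ (Fin n)) →L[ℝ] EuclideanSpace ℝ (Fin n) := a • ContinuousLinearMap.snd ℝ (EuclideanSpace ℝ (Fin n)) (EuclideanSpace ℝ (Fin n)) - h • (A.comp Dφ) with hDP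
  have hP : HasFDerivAt
      (fun z : EuclideanSpace ℝ (Fin n) × EuclideanSpace ℝ (Fin n) => a • z.2 - h • gradient f (z.1 + c • (a • z.2))) DP (x, p) :=
    ((hasFDerivAt_snd).const_smul a).sub (hg'.const_smul h)
  set L : (EuclideanSpace ℝ (Fin n) × EuclideanSpace ℝ (Fin n)) →L[ℝ] (EuclideanSpace ℝ (Fin n) × EuclideanSpace ℝ (Fin n)) :=
    (ContinuousLinearMap.fst ℝ (EuclideanSpace ℝ (Fin n)) (EuclideanSpace ℝ (Fin n)) + c • DP).prod DP with hL
  have hΨ : HasFDerivAt (nesterovStep f m γ h) L (x, p) := by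
    have := ((hasFDerivAt_fst).add (hP.const_smul c)).prodMk hP
    exact this
  rw [hΨ.fderiv]
  -- factor the Jacobian
  set B : EuclideanSpace ℝ (Fin n) →ₗ[ℝ] EuclideanSpace ℝ (Fin n) :=
    a • ((LinearMap.id : EuclideanSpace ℝ (Fin n) →ₗ[ℝ] EuclideanSpace ℝ (Fin n)) - (h ^ 2 / m) • A.toLinearMap) with hB
  have hfact : (L.toLinearMap : (EuclideanSpace ℝ (Fin n) × EuclideanSpace ℝ (Fin n)) →ₗ[ℝ] (EuclideanSpace ℝ (Fin n) × EuclideanSpace ℝ (Fin n)))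
      = shearU (c • (LinearMap.id : EuclideanSpace ℝ (Fin n) →ₗ[ℝ] EuclideanSpace ℝ (Fin n))) ∘ₗ shearL (-(h • A.toLinearMap)) ∘ₗ
        ((LinearMap.id : EuclideanSpace ℝ (Fin n) →ₗ[ℝ] EuclideanSpace ℝ (Fin n)).prodMap B) := by
    apply LinearMap.ext; intro z
    have : L z = (z.1 + c • DP z, DP z) := rfl
    apply Prod.ext <;>
      simp [this, shearU_apply, shearL_apply, hDP, hDφ, hB, LinearMap.prodMap_apply,
        ContinuousLinearMap.sub_apply, ContinuousLinearMap.add_apply,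
        ContinuousLinearMap.smul_apply, map_add, map_smul, smul_smul,
        smul_sub, smul_add, sub_eq_add_neg] <;>
      module
  rw [hfact, LinearMap.det_comp, LinearMap.det_comp, det_shearU, det_shearL,
    my_det_prodMap, LinearMap.det_id, one_mul, one_mul, one_mul, hB, LinearMap.det_smul]
  have hrank : Module.finrank ℝ (EuclideanSpace ℝ (Fin n)) = n := finrank_euclideanSpace_fin
  rw [hrank, ha, ← Real.exp_nat_mul]
  ring_nf
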